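/- For every m ≥ 1 one has ∂_m ∘ ∂_{m+1} = 0, and moreover ∂_0 ∘ ∂_1 = 0; that is, the bimodules P_m with the maps ∂_m form a chain complex of (A,A)-bimodules augmented over A by ∂_0. -/

import Mathlib

/-- The dot-count correction `δ(i,j,k)` in the KLRW/Coulomb-branch algebra. -/
def dlt (i j k : ℤ) : ℕ :=
  if 0 ≤ (i - j) * (j - k) then 0 else min (i - j).natAbs (j - k).natAbs

namespace CS

/-- Vertices `{0, …, n}` of the KLRW quiver. -/
abbrev Vtx (n : ℕ) := Fin (n + 1)

/-- Index of a basis element `a_{j,i}s^α` of the KLRW algebra: `(j, i, α)`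
(target, source, number of dots). -/
abbrev B (n : ℕ) := Vtx n × Vtx n × ℕ

/-- The KLRW algebra `A` as a free `k`-module on the symbols `a_{j,i}s^α`. -/
abbrev A (n : ℕ) (k : Type*) [Field k] := B n →₀ k

/-- `δ(i,j,l)` evaluated on vertices. -/
def dd (n : ℕ) (i j l : Vtx n) : ℕ := dlt ((i : ℕ) : ℤ) ((j : ℕ) : ℤ) ((l : ℕ) : ℤ)

/-- The arrows of the KLRW quiver: `p i : i → i+1`, `q i : i+1 → i`, loops `s i : i → i`
(`p i` stands for the paper's `p_{i+1}`). -/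
inductive Arr (n : ℕ) where
  | p (i : Fin n)
  | q (i : Fin n)
  | s (i : Vtx n)

/-- The ambiguities `P^m_{i+1}, Q^m_i, sP^m_{i+1}, sQ^m_i` indexing `S_m` for `m ≥ 2`
(`P i` stands for `P^m_{i+1}`, etc.). -/
inductive Shi (n : ℕ) where
  | P (i : Fin n)
  | Q (i : Fin n)
  | sP (i : Fin n)
  | sQ (i : Fin n)

/-- The index sets `S_m`: vertices for `m = 0`, arrows for `m = 1`, ambiguities for
`m ≥ 2`. -/
abbrev Sym (n : ℕ) (m : ℕ) : Type :=
  match m with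
  | 0 => Vtx n
  | 1 => Arr n
  | _ + 2 => Shi n

/-- Source vertex of an arrow. -/
def arrSrc {n : ℕ} : Arr n → Vtx n
  | .p i => i.castSucc
  | .q i => i.succ
  | .s i => i

/-- Target vertex of an arrow. -/
def arrTgt {n : ℕ} : Arr n → Vtx n
  | .p i => i.succ
  | .q i => i.castSucc
  | .s i => i

/-- Target vertex of an ambiguity (independent of its degree). -/
def shiTgt {n : ℕ} : Shi n → Vtx n
  | .P i => i.succ
  | .Q i => i.castSucc
  | .sP i => i.succ
  | .sQ i => i.castSucc

/-- Source vertex of an ambiguity of even degree. -/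
def shiSrcE {n : ℕ} : Shi n → Vtx n
  | .P i => i.succ
  | .Q i => i.castSucc
  | .sP i => i.castSucc
  | .sQ i => i.succ

/-- Source vertex of an ambiguity of odd degree. -/
def shiSrcO {n : ℕ} : Shi n → Vtx n
  | .P i => i.castSucc
  | .Q i => i.succ
  | .sP i => i.succ
  | .sQ i => i.castSucc

/-- Target vertex of an element of `S_m`. -/
def symTgt (n : ℕ) : (m : ℕ) → Sym n m → Vtx n
  | 0, v => v
  | 1, γ => arrTgt γ
  | _ + 2, w => shiTgt w

/-- Source vertex of an element of `S_m`. -/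
def symSrc (n : ℕ) : (m : ℕ) → Sym n m → Vtx n
  | 0, v => v
  | 1, γ => arrSrc γ
  | m + 2, w => if Even (m + 2) then shiSrcE w else shiSrcO w

/-- Generators of the projective bimodule `P_m`: triples `a ⊗ w ⊗ b` with `w ∈ S_m` and
basis elements `a, b` of `A` such that `source(a) = tgt(w)` and `target(b) = src(w)`. -/
abbrev Gen (n m : ℕ) :=
  {g : B n × Sym n m × B n // g.1.2.1 = symTgt n m g.2.1 ∧ (g.2.2).1 = symSrc n m g.2.1}

/-- The projective `(A,A)`-bimodule `P_m = A ⊗ kS_m ⊗ A`: the free `k`-module on the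
compatible triples. -/
abbrev P (n : ℕ) (k : Type*) [Field k] (m : ℕ) := Gen n m →₀ k

variable (n : ℕ) (k : Type*) [Field k]

/-- The generator `a ⊗ w ⊗ b`, interpreted as `0` if the triple is not compatible
(all triples appearing in the differentials below are compatible). -/
noncomputable def genSingle (m : ℕ) (a : B n) (w : Sym n m) (b : B n) : P n k m :=
  if h : a.2.1 = symTgt n m w ∧ b.1 = symSrc n m w then
    Finsupp.single ⟨(a, w, b), h⟩ 1
  else 0

/-- Left action of `A` on `P_m`: `x·(a⊗w⊗b) = (x·a)⊗w⊗b`, expanding products in `A`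
and discarding zero terms. -/
noncomputable def actL (m : ℕ) (x : A n k) (v : P n k m) : P n k m :=
  x.sum fun xb c => v.sum fun g d =>
    (c * d) •
      (if xb.2.1 = g.1.1.1 then
        genSingle n k m
          (xb.1, g.1.1.2.1, xb.2.2 + g.1.1.2.2 + dd n g.1.1.2.1 g.1.1.1 xb.1)
          g.1.2.1 g.1.2.2
      else 0)

/-- Right action of `A` on `P_m`: `(a⊗w⊗b)·y = a⊗w⊗(b·y)`, expanding products in `A`
and discarding zero terms. -/
noncomputable def actR (m : ℕ) (v : P n k m) (y : A n k) : P n k m :=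
  v.sum fun g d => y.sum fun yb c =>
    (d * c) •
      (if g.1.2.2.2.1 = yb.1 then
        genSingle n k m g.1.1 g.1.2.1
          (g.1.2.2.1, yb.2.1, g.1.2.2.2.2 + yb.2.2 + dd n yb.2.1 yb.1 g.1.2.2.1)
      else 0)

/-- The augmentation `∂_0 : P_0 → A`, `a ⊗ e_i ⊗ b ↦ a·b`. -/
noncomputable def bnd0 (v : P n k 0) : A n k :=
  v.sum fun g c =>
    if g.1.1.2.1 = g.1.2.2.1 then
      Finsupp.single
        (g.1.1.1, g.1.2.2.2.1,
          g.1.1.2.2 + g.1.2.2.2.2 + dd n g.1.2.2.2.1 g.1.2.2.1 g.1.1.1) c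
    else 0

/-- The idempotent basis element `e_v = a_{v,v}s^0`. -/
def eB {n : ℕ} (v : Vtx n) : B n := (v, v, 0)

/-- The basis element `p_{i+1} = a_{i+1,i}s^0`. -/
def pB {n : ℕ} (i : Fin n) : B n := (i.succ, i.castSucc, 0)

/-- The basis element `q_i = a_{i,i+1}s^0`. -/
def qB {n : ℕ} (i : Fin n) : B n := (i.castSucc, i.succ, 0)

/-- The basis element `s_v = a_{v,v}s^1` (in the differential formulas `s_i` denotes
`a_{i,i}s^1`). -/
def sB {n : ℕ} (v : Vtx n) : B n := (v, v, 1)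

/-- The basis element of `A` corresponding to an arrow (`s i ↦ a_{i,i}s^1`). -/
def arrB {n : ℕ} : Arr n → B n
  | .p i => pB i
  | .q i => qB i
  | .s i => sB i

/-- `P^m_{i+1}` as an element of `S_m`, for `m ≥ 1` (with `P¹_{i+1} := p_{i+1}`). -/
def lowP (n : ℕ) : (m : ℕ) → Fin n → Sym n (m + 1)
  | 0, i => Arr.p i
  | _ + 1, i => Shi.P i

/-- `Q^m_i` as an element of `S_m`, for `m ≥ 1` (with `Q¹_i := q_i`). -/
def lowQ (n : ℕ) : (m : ℕ) → Fin n → Sym n (m + 1)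
  | 0, i => Arr.q i
  | _ + 1, i => Shi.Q i

/-- `sP^m_{i+1}` as an element of `S_m`, for `m ≥ 1` (with `sP¹_{i+1} := s_{i+1}`). -/
def lowSP (n : ℕ) : (m : ℕ) → Fin n → Sym n (m + 1)
  | 0, i => Arr.s i.succ
  | _ + 1, i => Shi.sP i

/-- `sQ^m_i` as an element of `S_m`, for `m ≥ 1` (with `sQ¹_i := s_i`). -/
def lowSQ (n : ℕ) : (m : ℕ) → Fin n → Sym n (m + 1)
  | 0, i => Arr.s i.castSucc
  | _ + 1, i => Shi.sQ i

/-- The idempotent at the target of `w` (the left "1" in the differential formulas). -/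
def oneL (m : ℕ) (w : Sym n m) : B n := eB (symTgt n m w)

/-- The idempotent at the source of `w` (the right "1" in the differential formulas). -/
def oneR (m : ℕ) (w : Sym n m) : B n := eB (symSrc n m w)

/-- Value of the differential `∂_{m+1}` on the generator `1 ⊗ w ⊗ 1`, `w ∈ S_{m+1}`. -/
noncomputable def dGen : (m : ℕ) → Sym n (m + 1) → P n k m
  | 0, γ =>
      genSingle n k 0 (eB (arrTgt γ)) (arrTgt γ) (arrB γ)
        - genSingle n k 0 (arrB γ) (arrSrc γ) (eB (arrSrc γ))
  | m + 1, w =>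
      if Even (m + 2) then
        -- the formulas for `∂_m` with `m ≥ 2` even
        match w with
        | Shi.Q i =>
            genSingle n k (m + 1) (oneL n (m + 1) (lowQ n m i)) (lowQ n m i) (pB i)
              + genSingle n k (m + 1) (qB i) (lowP n m i) (oneR n (m + 1) (lowP n m i))
              - genSingle n k (m + 1) (oneL n (m + 1) (lowSQ n m i)) (lowSQ n m i)
                  (oneR n (m + 1) (lowSQ n m i))
        | Shi.P i =>
            genSingle n k (m + 1) (oneL n (m + 1) (lowP n m i)) (lowP n m i) (qB i)
              + genSingle n k (m + 1) (pB i) (lowQ n m i) (oneR n (m + 1) (lowQ n m i))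
              - genSingle n k (m + 1) (oneL n (m + 1) (lowSP n m i)) (lowSP n m i)
                  (oneR n (m + 1) (lowSP n m i))
        | Shi.sP i =>
            genSingle n k (m + 1) (oneL n (m + 1) (lowSP n m i)) (lowSP n m i) (pB i)
              + genSingle n k (m + 1) (sB i.succ) (lowP n m i) (oneR n (m + 1) (lowP n m i))
              - genSingle n k (m + 1) (pB i) (lowSQ n m i) (oneR n (m + 1) (lowSQ n m i))
              - genSingle n k (m + 1) (oneL n (m + 1) (lowP n m i)) (lowP n m i) (sB i.castSucc)
        | Shi.sQ i =>
            genSingle n k (m + 1) (oneL n (m + 1) (lowSQ n m i)) (lowSQ n m i) (qB i)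
              + genSingle n k (m + 1) (sB i.castSucc) (lowQ n m i) (oneR n (m + 1) (lowQ n m i))
              - genSingle n k (m + 1) (qB i) (lowSP n m i) (oneR n (m + 1) (lowSP n m i))
              - genSingle n k (m + 1) (oneL n (m + 1) (lowQ n m i)) (lowQ n m i) (sB i.succ)
      else
        -- the formulas for `∂_m` with `m ≥ 3` odd
        match w with
        | Shi.Q i =>
            genSingle n k (m + 1) (oneL n (m + 1) (lowQ n m i)) (lowQ n m i) (qB i)
              - genSingle n k (m + 1) (qB i) (lowP n m i) (oneR n (m + 1) (lowP n m i))
              + genSingle n k (m + 1) (oneL n (m + 1) (lowSQ n m i)) (lowSQ n m i)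
                  (oneR n (m + 1) (lowSQ n m i))
        | Shi.P i =>
            genSingle n k (m + 1) (oneL n (m + 1) (lowP n m i)) (lowP n m i) (pB i)
              - genSingle n k (m + 1) (pB i) (lowQ n m i) (oneR n (m + 1) (lowQ n m i))
              + genSingle n k (m + 1) (oneL n (m + 1) (lowSP n m i)) (lowSP n m i)
                  (oneR n (m + 1) (lowSP n m i))
        | Shi.sP i =>
            genSingle n k (m + 1) (oneL n (m + 1) (lowSP n m i)) (lowSP n m i) (qB i)
              - genSingle n k (m + 1) (sB i.succ) (lowP n m i) (oneR n (m + 1) (lowP n m i))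
              + genSingle n k (m + 1) (pB i) (lowSQ n m i) (oneR n (m + 1) (lowSQ n m i))
              + genSingle n k (m + 1) (oneL n (m + 1) (lowP n m i)) (lowP n m i) (sB i.succ)
        | Shi.sQ i =>
            genSingle n k (m + 1) (oneL n (m + 1) (lowSQ n m i)) (lowSQ n m i) (pB i)
              - genSingle n k (m + 1) (sB i.castSucc) (lowQ n m i) (oneR n (m + 1) (lowQ n m i))
              + genSingle n k (m + 1) (qB i) (lowSP n m i) (oneR n (m + 1) (lowSP n m i))
              + genSingle n k (m + 1) (oneL n (m + 1) (lowQ n m i)) (lowQ n m i) (sB i.castSucc)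

/-- The differential `∂_{m+1} : P_{m+1} → P_m` of the Chouhy–Solotar complex of the KLRW
algebra, extended from the generators by `A`-bimodule linearity:
`∂(a ⊗ w ⊗ b) = a · ∂(1 ⊗ w ⊗ 1) · b`. -/
noncomputable def bnd (m : ℕ) (v : P n k (m + 1)) : P n k m :=
  v.sum fun g c =>
    c • actL n k m (Finsupp.single g.1.1 1)
          (actR n k m (dGen n k m g.1.2.1) (Finsupp.single g.1.2.2 1))


section Aux

set_option maxHeartbeats 1000000 in
lemma dlt_cocycle (i j k l : ℤ) : dlt i j k + dlt i k l = dlt j k l + dlt i j l := by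
  unfold dlt
  simp only [mul_nonneg_iff, sub_nonneg, sub_nonpos]
  split_ifs <;> omega

/-- Product of two (composable) basis elements of `A`. -/
def mulB {n : ℕ} (x y : B n) : B n := (x.1, y.2.1, x.2.2 + y.2.2 + dd n y.2.1 y.1 x.1)

@[simp] lemma dd_left {n : ℕ} (v w : Vtx n) : dd n v v w = 0 := by
  simp [dd, dlt]

@[simp] lemma dd_right {n : ℕ} (v w : Vtx n) : dd n v w w = 0 := by
  simp [dd, dlt]

@[simp] lemma dd_qp {n : ℕ} (i : Fin n) : dd n i.castSucc i.succ i.castSucc = 1 := by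
  simp only [dd, dlt, mul_nonneg_iff, sub_nonneg, sub_nonpos, Fin.coe_castSucc, Fin.val_succ]
  split_ifs <;> omega

@[simp] lemma dd_pq {n : ℕ} (i : Fin n) : dd n i.succ i.castSucc i.succ = 1 := by
  simp only [dd, dlt, mul_nonneg_iff, sub_nonneg, sub_nonpos, Fin.coe_castSucc, Fin.val_succ]
  split_ifs <;> omega

lemma mulB_assoc {n : ℕ} {x y z : B n} (h1 : x.2.1 = y.1) (h2 : y.2.1 = z.1) :
    mulB (mulB x y) z = mulB x (mulB y z) := by
  rcases x with ⟨x1, x2, x3⟩; rcases y with ⟨y1, y2, y3⟩; rcases z with ⟨z1, z2, z3⟩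
  simp only [mulB]
  simp only at h1 h2
  subst h2
  refine Prod.ext rfl (Prod.ext rfl ?_)
  have H := dlt_cocycle ((z2 : ℕ) : ℤ) ((y2 : ℕ) : ℤ) ((y1 : ℕ) : ℤ) ((x1 : ℕ) : ℤ)
  simp only [dd]
  omega

lemma eB_mulB {n : ℕ} {v : Vtx n} {y : B n} (h : y.1 = v) : mulB (eB v) y = y := by
  rcases y with ⟨y1, y2, y3⟩
  dsimp at h; subst h
  simp [mulB, eB]

lemma mulB_eB {n : ℕ} {v : Vtx n} {x : B n} (h : x.2.1 = v) : mulB x (eB v) = x := by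
  rcases x with ⟨x1, x2, x3⟩
  dsimp at h; subst h
  simp [mulB, eB]

end Aux

section Infra

variable {n : ℕ} {k : Type*} [Field k]

lemma actL_zero (m : ℕ) (x : A n k) : actL n k m x 0 = 0 := by
  simp [actL]

lemma actL_add (m : ℕ) (x : A n k) (u v : P n k m) :
    actL n k m x (u + v) = actL n k m x u + actL n k m x v := by
  unfold actL
  rw [← Finsupp.sum_add]
  congr 1; funext xb c
  exact Finsupp.sum_add_index' (by simp) (by intros; rw [mul_add, add_smul])

lemma actL_smul (m : ℕ) (x : A n k) (c : k) (v : P n k m) :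
    actL n k m x (c • v) = c • actL n k m x v := by
  unfold actL
  rw [Finsupp.smul_sum]
  congr 1; funext xb cx
  rw [Finsupp.sum_smul_index' (by simp), Finsupp.smul_sum]
  congr 1; funext g d
  rw [smul_eq_mul, smul_smul, mul_left_comm]

lemma actL_neg (m : ℕ) (x : A n k) (v : P n k m) :
    actL n k m x (-v) = - actL n k m x v := by
  have h : actL n k m x (v + -v) = 0 := by rw [add_neg_cancel]; exact actL_zero m x
  rw [actL_add] at h
  exact (neg_eq_of_add_eq_zero_right h).symm

lemma actL_sub (m : ℕ) (x : A n k) (u v : P n k m) :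
    actL n k m x (u - v) = actL n k m x u - actL n k m x v := by
  rw [sub_eq_add_neg, actL_add, actL_neg, sub_eq_add_neg]

lemma actR_zero (m : ℕ) (y : A n k) : actR n k m 0 y = 0 := by
  simp [actR]

lemma actR_add (m : ℕ) (u v : P n k m) (y : A n k) :
    actR n k m (u + v) y = actR n k m u y + actR n k m v y := by
  unfold actR
  exact Finsupp.sum_add_index' (by simp) (by
    intro g d1 d2
    rw [← Finsupp.sum_add]
    congr 1; funext yb c
    rw [add_mul, add_smul])

lemma actR_smul (m : ℕ) (c : k) (v : P n k m) (y : A n k) :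
    actR n k m (c • v) y = c • actR n k m v y := by
  unfold actR
  rw [Finsupp.sum_smul_index' (by simp), Finsupp.smul_sum]
  congr 1; funext g d
  rw [Finsupp.smul_sum]
  congr 1; funext yb cy
  rw [smul_eq_mul, smul_smul, mul_assoc]

lemma actR_neg (m : ℕ) (v : P n k m) (y : A n k) :
    actR n k m (-v) y = - actR n k m v y := by
  have h : actR n k m (v + -v) y = 0 := by rw [add_neg_cancel]; exact actR_zero m y
  rw [actR_add] at h
  exact (neg_eq_of_add_eq_zero_right h).symm

lemma actR_sub (m : ℕ) (u v : P n k m) (y : A n k) :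
    actR n k m (u - v) y = actR n k m u y - actR n k m v y := by
  rw [sub_eq_add_neg, actR_add, actR_neg, sub_eq_add_neg]

lemma bnd_zero (m : ℕ) : bnd n k m 0 = 0 := by
  simp [bnd]

lemma bnd_add (m : ℕ) (u v : P n k (m + 1)) :
    bnd n k m (u + v) = bnd n k m u + bnd n k m v := by
  unfold bnd
  exact Finsupp.sum_add_index' (by simp) (by intros; rw [add_smul])

lemma bnd_smul (m : ℕ) (c : k) (v : P n k (m + 1)) :
    bnd n k m (c • v) = c • bnd n k m v := by
  unfold bnd
  rw [Finsupp.sum_smul_index' (by simp), Finsupp.smul_sum]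
  congr 1; funext g d
  rw [smul_eq_mul, smul_smul]

lemma bnd_single (m : ℕ) (g : Gen n (m + 1)) (c : k) :
    bnd n k m (Finsupp.single g c) =
      c • actL n k m (Finsupp.single g.1.1 1)
            (actR n k m (dGen n k m g.1.2.1) (Finsupp.single g.1.2.2 1)) := by
  unfold bnd
  exact Finsupp.sum_single_index (by simp)

lemma bnd0_zero : bnd0 n k 0 = 0 := by
  simp [bnd0]

lemma bnd0_add (u v : P n k 0) : bnd0 n k (u + v) = bnd0 n k u + bnd0 n k v := by
  unfold bnd0
  exact Finsupp.sum_add_index' (by simp) (by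
    intro g c1 c2
    split_ifs <;> simp [Finsupp.single_add])

lemma bnd0_smul (c : k) (v : P n k 0) : bnd0 n k (c • v) = c • bnd0 n k v := by
  unfold bnd0
  rw [Finsupp.sum_smul_index' (by intro g; split_ifs <;> simp), Finsupp.smul_sum]
  congr 1; funext g d
  split_ifs <;> simp [Finsupp.smul_single, smul_eq_mul]

lemma bnd0_sub (u v : P n k 0) : bnd0 n k (u - v) = bnd0 n k u - bnd0 n k v := by
  have h : bnd0 n k (v + (u - v)) = bnd0 n k v + bnd0 n k (u - v) := bnd0_add v (u - v)
  rw [add_sub_cancel] at h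
  rw [h]; abel

end Infra

section Infra2

variable {n : ℕ} {k : Type*} [Field k]

lemma bnd_neg (m : ℕ) (v : P n k (m + 1)) : bnd n k m (-v) = - bnd n k m v := by
  have h : bnd n k m (v + -v) = 0 := by rw [add_neg_cancel]; exact bnd_zero m
  rw [bnd_add] at h
  exact (neg_eq_of_add_eq_zero_right h).symm

lemma bnd_sub (m : ℕ) (u v : P n k (m + 1)) :
    bnd n k m (u - v) = bnd n k m u - bnd n k m v := by
  rw [sub_eq_add_neg, bnd_add, bnd_neg, sub_eq_add_neg]

end Infra2

section GenLemmas

variable {n : ℕ} {k : Type*} [Field k]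

lemma genSingle_pos (m : ℕ) (a : B n) (w : Sym n m) (b : B n)
    (h : a.2.1 = symTgt n m w ∧ b.1 = symSrc n m w) :
    genSingle n k m a w b = Finsupp.single ⟨(a, w, b), h⟩ 1 := dif_pos h

lemma genSingle_neg (m : ℕ) (a : B n) (w : Sym n m) (b : B n)
    (h : ¬ (a.2.1 = symTgt n m w ∧ b.1 = symSrc n m w)) :
    genSingle n k m a w b = 0 := dif_neg h

lemma single_gen (m : ℕ) (g : Gen n m) (c : k) :
    Finsupp.single g c = c • genSingle n k m g.1.1 g.1.2.1 g.1.2.2 := by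
  obtain ⟨⟨a, w, b⟩, hg⟩ := g
  rw [genSingle_pos m a w b hg, Finsupp.smul_single, smul_eq_mul, mul_one]

lemma actL_genSingle (m : ℕ) (x a : B n) (w : Sym n m) (b : B n) :
    actL n k m (Finsupp.single x 1) (genSingle n k m a w b) =
      if x.2.1 = a.1 then genSingle n k m (mulB x a) w b else 0 := by
  by_cases h : a.2.1 = symTgt n m w ∧ b.1 = symSrc n m w
  · rw [genSingle_pos m a w b h]
    unfold actL
    rw [Finsupp.sum_single_index (by simp), Finsupp.sum_single_index (by simp),
      one_mul, one_smul]
    rfl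
  · rw [genSingle_neg m a w b h, actL_zero,
      genSingle_neg m (mulB x a) w b (by exact h)]
    simp

lemma actR_genSingle (m : ℕ) (a : B n) (w : Sym n m) (b y : B n) :
    actR n k m (genSingle n k m a w b) (Finsupp.single y 1) =
      if b.2.1 = y.1 then genSingle n k m a w (mulB b y) else 0 := by
  by_cases h : a.2.1 = symTgt n m w ∧ b.1 = symSrc n m w
  · rw [genSingle_pos m a w b h]
    unfold actR
    rw [Finsupp.sum_single_index (by simp), Finsupp.sum_single_index (by simp),
      one_mul, one_smul]
    rfl
  · rw [genSingle_neg m a w b h, actR_zero,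
      genSingle_neg m a w (mulB b y) (by exact h)]
    simp

end GenLemmas

section AssocLemmas

variable {n : ℕ} {k : Type*} [Field k]

lemma mulB_fst {n : ℕ} (x y : B n) : (mulB x y).1 = x.1 := rfl
lemma mulB_snd {n : ℕ} (x y : B n) : (mulB x y).2.1 = y.2.1 := rfl

lemma actL_actL (m : ℕ) (x a : B n) (u : P n k m) :
    actL n k m (Finsupp.single x 1) (actL n k m (Finsupp.single a 1) u) =
      if x.2.1 = a.1 then actL n k m (Finsupp.single (mulB x a) 1) u else 0 := by
  induction u using Finsupp.induction_linear with
  | zero => rw [actL_zero, actL_zero]; split_ifs <;> simp [actL_zero]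
  | add f g hf hg =>
      rw [actL_add, actL_add, hf, hg]
      split_ifs
      · rw [actL_add]
      · simp
  | single g c =>
      rw [single_gen m g c]
      simp only [actL_smul]
      by_cases h1 : a.2.1 = g.1.1.1 <;> by_cases h2 : x.2.1 = a.1
      · simp [h1, h2, actL_genSingle, mulB_fst, mulB_snd, mulB_assoc h2 h1]
      · simp [h1, h2, actL_genSingle, actL_zero, mulB_fst, mulB_snd]
      · simp [h1, h2, actL_genSingle, actL_zero, mulB_fst, mulB_snd]
      · simp [h1, h2, actL_genSingle, actL_zero, mulB_fst, mulB_snd]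

lemma actR_actR (m : ℕ) (u : P n k m) (y z : B n) :
    actR n k m (actR n k m u (Finsupp.single y 1)) (Finsupp.single z 1) =
      if y.2.1 = z.1 then actR n k m u (Finsupp.single (mulB y z) 1) else 0 := by
  induction u using Finsupp.induction_linear with
  | zero => rw [actR_zero, actR_zero]; split_ifs <;> simp [actR_zero]
  | add f g hf hg =>
      rw [actR_add, actR_add, hf, hg]
      split_ifs
      · rw [actR_add]
      · simp
  | single g c =>
      rw [single_gen m g c]
      simp only [actR_smul]
      by_cases h1 : g.1.2.2.2.1 = y.1 <;> by_cases h2 : y.2.1 = z.1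
      · simp [h1, h2, actR_genSingle, mulB_fst, mulB_snd, mulB_assoc h1 h2]
      · simp [h1, h2, actR_genSingle, actR_zero, mulB_fst, mulB_snd]
      · simp [h1, h2, actR_genSingle, actR_zero, mulB_fst, mulB_snd]
      · simp [h1, h2, actR_genSingle, actR_zero, mulB_fst, mulB_snd]

lemma actL_actR_comm (m : ℕ) (x : B n) (u : P n k m) (y : B n) :
    actL n k m (Finsupp.single x 1) (actR n k m u (Finsupp.single y 1)) =
      actR n k m (actL n k m (Finsupp.single x 1) u) (Finsupp.single y 1) := by
  induction u using Finsupp.induction_linear with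
  | zero => simp [actR_zero, actL_zero]
  | add f g hf hg => rw [actR_add, actL_add, actL_add, actR_add, hf, hg]
  | single g c =>
      rw [single_gen m g c]
      simp only [actL_smul, actR_smul]
      by_cases h1 : g.1.2.2.2.1 = y.1 <;> by_cases h2 : x.2.1 = g.1.1.1 <;>
        simp [h1, h2, actL_genSingle, actR_genSingle, actL_zero, actR_zero,
          mulB_fst, mulB_snd]

end AssocLemmas

section BndLemmas

variable {n : ℕ} {k : Type*} [Field k]

lemma bnd_genSingle (m : ℕ) (a : B n) (w : Sym n (m + 1)) (b : B n) :
    bnd n k m (genSingle n k (m + 1) a w b) =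
      if a.2.1 = symTgt n (m + 1) w ∧ b.1 = symSrc n (m + 1) w then
        actL n k m (Finsupp.single a 1)
          (actR n k m (dGen n k m w) (Finsupp.single b 1))
      else 0 := by
  by_cases h : a.2.1 = symTgt n (m + 1) w ∧ b.1 = symSrc n (m + 1) w
  · rw [genSingle_pos (m + 1) a w b h, if_pos h, bnd_single, one_smul]
  · rw [genSingle_neg (m + 1) a w b h, if_neg h, bnd_zero]

lemma bnd_actL (m : ℕ) (x : B n) (u : P n k (m + 1)) :
    bnd n k m (actL n k (m + 1) (Finsupp.single x 1) u) =
      actL n k m (Finsupp.single x 1) (bnd n k m u) := by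
  induction u using Finsupp.induction_linear with
  | zero => simp [actL_zero, bnd_zero]
  | add f g hf hg => rw [actL_add, bnd_add, bnd_add, actL_add, hf, hg]
  | single g c =>
      rw [single_gen (m + 1) g c]
      simp only [actL_smul, bnd_smul]
      rw [actL_genSingle, bnd_genSingle, if_pos g.2]
      by_cases h1 : x.2.1 = g.1.1.1
      · rw [if_pos h1, bnd_genSingle,
          if_pos (show (mulB x g.1.1).2.1 = symTgt n (m + 1) g.1.2.1 ∧
            g.1.2.2.1 = symSrc n (m + 1) g.1.2.1 from g.2),
          actL_actL, if_pos h1]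
      · rw [if_neg h1, bnd_zero, actL_actL, if_neg h1]

lemma bnd_actR (m : ℕ) (u : P n k (m + 1)) (y : B n) :
    bnd n k m (actR n k (m + 1) u (Finsupp.single y 1)) =
      actR n k m (bnd n k m u) (Finsupp.single y 1) := by
  induction u using Finsupp.induction_linear with
  | zero => simp [actR_zero, bnd_zero]
  | add f g hf hg => rw [actR_add, bnd_add, bnd_add, actR_add, hf, hg]
  | single g c =>
      rw [single_gen (m + 1) g c]
      simp only [actR_smul, bnd_smul]
      rw [actR_genSingle, bnd_genSingle, if_pos g.2]
      by_cases h1 : g.1.2.2.2.1 = y.1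
      · rw [if_pos h1, bnd_genSingle,
          if_pos (show g.1.1.2.1 = symTgt n (m + 1) g.1.2.1 ∧
            (mulB g.1.2.2 y).1 = symSrc n (m + 1) g.1.2.1 from g.2),
          ← actL_actR_comm, actR_actR, if_pos h1]
      · rw [if_neg h1, bnd_zero, ← actL_actR_comm, actR_actR, if_neg h1, actL_zero]

lemma bnd0_genSingle (a : B n) (v : Vtx n) (b : B n) :
    bnd0 n k (genSingle n k 0 a v b) =
      if a.2.1 = symTgt n 0 v ∧ b.1 = symSrc n 0 v then
        Finsupp.single (mulB a b) 1
      else 0 := by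
  by_cases h : a.2.1 = symTgt n 0 v ∧ b.1 = symSrc n 0 v
  · rw [genSingle_pos 0 a v b h, if_pos h]
    unfold bnd0
    rw [Finsupp.sum_single_index (by split_ifs <;> simp)]
    rw [if_pos (show a.2.1 = b.1 from h.1.trans h.2.symm)]
    rfl
  · rw [genSingle_neg 0 a v b h, if_neg h, bnd0_zero]

end BndLemmas

section SymLemmas

variable {n : ℕ} {k : Type*} [Field k]

lemma symTgt_lowP (m : ℕ) (i : Fin n) : symTgt n (m + 1) (lowP n m i) = i.succ := by
  cases m <;> rfl
lemma symTgt_lowQ (m : ℕ) (i : Fin n) : symTgt n (m + 1) (lowQ n m i) = i.castSucc := by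
  cases m <;> rfl
lemma symTgt_lowSP (m : ℕ) (i : Fin n) : symTgt n (m + 1) (lowSP n m i) = i.succ := by
  cases m <;> rfl
lemma symTgt_lowSQ (m : ℕ) (i : Fin n) : symTgt n (m + 1) (lowSQ n m i) = i.castSucc := by
  cases m <;> rfl

lemma symSrc_lowP (m : ℕ) (i : Fin n) :
    symSrc n (m + 1) (lowP n m i) = if Even (m + 1) then i.succ else i.castSucc := by
  cases m with
  | zero => rw [if_neg (by decide)]; rfl
  | succ m' => rfl
lemma symSrc_lowQ (m : ℕ) (i : Fin n) :
    symSrc n (m + 1) (lowQ n m i) = if Even (m + 1) then i.castSucc else i.succ := by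
  cases m with
  | zero => rw [if_neg (by decide)]; rfl
  | succ m' => rfl
lemma symSrc_lowSP (m : ℕ) (i : Fin n) :
    symSrc n (m + 1) (lowSP n m i) = if Even (m + 1) then i.castSucc else i.succ := by
  cases m with
  | zero => rw [if_neg (by decide)]; rfl
  | succ m' => rfl
lemma symSrc_lowSQ (m : ℕ) (i : Fin n) :
    symSrc n (m + 1) (lowSQ n m i) = if Even (m + 1) then i.succ else i.castSucc := by
  cases m with
  | zero => rw [if_neg (by decide)]; rfl
  | succ m' => rfl

end SymLemmas

section Core0

variable {n : ℕ} {k : Type*} [Field k]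

lemma core0 (γ : Arr n) (a b : B n) (ha : a.2.1 = arrTgt γ) (hb : b.1 = arrSrc γ) :
    bnd0 n k (actL n k 0 (Finsupp.single a 1)
      (actR n k 0 (dGen n k 0 γ) (Finsupp.single b 1))) = 0 := by
  have h1 : (arrB γ).1 = arrTgt γ := by cases γ <;> rfl
  have h2 : (arrB γ).2.1 = arrSrc γ := by cases γ <;> rfl
  rw [show dGen n k 0 γ = genSingle n k 0 (eB (arrTgt γ)) (arrTgt γ) (arrB γ)
      - genSingle n k 0 (arrB γ) (arrSrc γ) (eB (arrSrc γ)) from rfl]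
  rw [actR_sub, actR_genSingle, actR_genSingle,
    if_pos (show (arrB γ).2.1 = b.1 from h2.trans hb.symm),
    if_pos (show (eB (arrSrc γ)).2.1 = b.1 from hb.symm),
    eB_mulB hb]
  rw [actL_sub, actL_genSingle, actL_genSingle,
    if_pos (show a.2.1 = (eB (arrTgt γ)).1 from ha),
    if_pos (show a.2.1 = (arrB γ).1 from ha.trans h1.symm),
    mulB_eB ha]
  rw [bnd0_sub, bnd0_genSingle, bnd0_genSingle,
    if_pos (show a.2.1 = symTgt n 0 (arrTgt γ) ∧ (mulB (arrB γ) b).1 = symSrc n 0 (arrTgt γ)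
      from ⟨ha, h1⟩),
    if_pos (show (mulB a (arrB γ)).2.1 = symTgt n 0 (arrSrc γ) ∧ b.1 = symSrc n 0 (arrSrc γ)
      from ⟨h2, hb⟩),
    ← mulB_assoc (ha.trans h1.symm) (h2.trans hb.symm), sub_self]

end Core0

section CoreSym

variable {n : ℕ} {k : Type*} [Field k]

@[simp] lemma symTgt_P' (m : ℕ) (i : Fin n) : symTgt n (m+1+1) (Shi.P i) = i.succ := rfl
@[simp] lemma symTgt_Q' (m : ℕ) (i : Fin n) : symTgt n (m+1+1) (Shi.Q i) = i.castSucc := rfl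
@[simp] lemma symTgt_sP' (m : ℕ) (i : Fin n) : symTgt n (m+1+1) (Shi.sP i) = i.succ := rfl
@[simp] lemma symTgt_sQ' (m : ℕ) (i : Fin n) : symTgt n (m+1+1) (Shi.sQ i) = i.castSucc := rfl

lemma symSrc_P' (m : ℕ) (i : Fin n) :
    symSrc n (m+1+1) (Shi.P i) = if Even (m+1+1) then i.succ else i.castSucc := rfl
lemma symSrc_Q' (m : ℕ) (i : Fin n) :
    symSrc n (m+1+1) (Shi.Q i) = if Even (m+1+1) then i.castSucc else i.succ := rfl
lemma symSrc_sP' (m : ℕ) (i : Fin n) :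
    symSrc n (m+1+1) (Shi.sP i) = if Even (m+1+1) then i.castSucc else i.succ := rfl
lemma symSrc_sQ' (m : ℕ) (i : Fin n) :
    symSrc n (m+1+1) (Shi.sQ i) = if Even (m+1+1) then i.succ else i.castSucc := rfl

@[simp] lemma symTgt_arr (γ : Arr n) : symTgt n (0+1) γ = arrTgt γ := rfl
@[simp] lemma symSrc_arr (γ : Arr n) : symSrc n (0+1) γ = arrSrc γ := rfl

end CoreSym

section CoreZero

variable {n : ℕ} {k : Type*} [Field k]

set_option maxHeartbeats 2000000 in
lemma core_zero (w : Sym n (0 + 2)) : bnd n k 0 (dGen n k (0 + 1) w) = 0 := by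
  have hA : Even (0 + 2) := by decide
  have hB : ¬ Even (0 + 1) := by decide
  cases w <;>
    simp [dGen, hA, hB, bnd_sub (m := 0), bnd_add (m := 0), bnd_neg (m := 0), bnd_smul (m := 0), bnd_genSingle (m := 0), actR_sub (m := 0), actR_add (m := 0),
      actR_neg (m := 0), actR_smul (m := 0), actR_genSingle (m := 0), actL_sub (m := 0), actL_add (m := 0), actL_neg (m := 0), actL_smul (m := 0), actL_genSingle (m := 0), actR_zero (m := 0), actL_zero (m := 0),
      bnd_zero (m := 0), mulB, oneL, oneR, eB, pB, qB, sB, arrB, arrTgt, arrSrc,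
      lowP, lowQ, lowSP, lowSQ, symTgt, symSrc] <;>
    abel

end CoreZero

section CoreSucc

variable {n : ℕ} {k : Type*} [Field k]

@[simp] lemma lowP_succ (m : ℕ) (i : Fin n) : lowP n (m + 1) i = Shi.P i := rfl
@[simp] lemma lowQ_succ (m : ℕ) (i : Fin n) : lowQ n (m + 1) i = Shi.Q i := rfl
@[simp] lemma lowSP_succ (m : ℕ) (i : Fin n) : lowSP n (m + 1) i = Shi.sP i := rfl
@[simp] lemma lowSQ_succ (m : ℕ) (i : Fin n) : lowSQ n (m + 1) i = Shi.sQ i := rfl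

set_option maxHeartbeats 12000000 in
lemma core_succ (m' : ℕ) (w : Sym n (m' + 1 + 2)) :
    bnd n k (m' + 1) (dGen n k (m' + 1 + 1) w) = 0 := by
  rcases Nat.even_or_odd m' with hm | hm
  · have hA : ¬ Even (m' + 1 + 2) := by rw [Nat.even_iff] at hm ⊢; omega
    have hB : Even (m' + 1 + 1) := by rw [Nat.even_iff] at hm ⊢; omega
    have hC : Even (m' + 2) := by rw [Nat.even_iff] at hm ⊢; omega
    have hD : ¬ Even (m' + 1) := by rw [Nat.even_iff] at hm ⊢; omega
    cases w <;>
      simp [dGen, hA, hB, hC, hD, bnd_sub (m := m' + 1), bnd_add (m := m' + 1), bnd_neg (m := m' + 1), bnd_smul (m := m' + 1), bnd_genSingle (m := m' + 1),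
        actR_sub, actR_add, actR_neg, actR_smul, actR_genSingle,
        actL_sub, actL_add, actL_neg, actL_smul, actL_genSingle,
        actR_zero, actL_zero, bnd_zero (m := m' + 1), mulB, oneL, oneR, eB, pB, qB, sB,
        symSrc_P', symSrc_Q', symSrc_sP', symSrc_sQ',
        symTgt_lowP, symTgt_lowQ, symTgt_lowSP, symTgt_lowSQ,
        symSrc_lowP, symSrc_lowQ, symSrc_lowSP, symSrc_lowSQ] <;>
      abel
  · rw [Nat.odd_iff] at hm
    have hA : Even (m' + 1 + 2) := by rw [Nat.even_iff]; omega
    have hB : ¬ Even (m' + 1 + 1) := by rw [Nat.even_iff]; omega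
    have hC : ¬ Even (m' + 2) := by rw [Nat.even_iff]; omega
    have hD : Even (m' + 1) := by rw [Nat.even_iff]; omega
    cases w <;>
      simp [dGen, hA, hB, hC, hD, bnd_sub (m := m' + 1), bnd_add (m := m' + 1), bnd_neg (m := m' + 1), bnd_smul (m := m' + 1), bnd_genSingle (m := m' + 1),
        actR_sub, actR_add, actR_neg, actR_smul, actR_genSingle,
        actL_sub, actL_add, actL_neg, actL_smul, actL_genSingle,
        actR_zero, actL_zero, bnd_zero (m := m' + 1), mulB, oneL, oneR, eB, pB, qB, sB,
        symSrc_P', symSrc_Q', symSrc_sP', symSrc_sQ',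
        symTgt_lowP, symTgt_lowQ, symTgt_lowSP, symTgt_lowSQ,
        symSrc_lowP, symSrc_lowQ, symSrc_lowSP, symSrc_lowSQ] <;>
      abel

lemma core (m : ℕ) (w : Sym n (m + 2)) : bnd n k m (dGen n k (m + 1) w) = 0 := by
  match m with
  | 0 => exact core_zero w
  | m' + 1 => exact core_succ m' w

end CoreSucc

end CS

/-- For every `m ≥ 1` one has `∂_m ∘ ∂_{m+1} = 0`, and moreover `∂_0 ∘ ∂_1 = 0`: the
bimodules `P_m` with the maps `∂_m` form a chain complex of `(A,A)`-bimodules augmented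
over `A` by `∂_0`.  (Here `CS.bnd n k m` is the differential `∂_{m+1} : P_{m+1} → P_m`
and `CS.bnd0 n k` is `∂_0 : P_0 → A`.) -/
theorem chouhy_solotar_is_complex (n : ℕ) (hn : 1 ≤ n) (k : Type*) [Field k] :
    (∀ (m : ℕ) (v : CS.P n k (m + 2)), CS.bnd n k m (CS.bnd n k (m + 1) v) = 0) ∧
    (∀ v : CS.P n k 1, CS.bnd0 n k (CS.bnd n k 0 v) = 0) := by
  constructor
  · intro m v
    induction v using Finsupp.induction_linear with
    | zero => rw [CS.bnd_zero, CS.bnd_zero]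
    | add f g hf hg => rw [CS.bnd_add, CS.bnd_add, hf, hg, add_zero]
    | single g c =>
        rw [CS.bnd_single, CS.bnd_smul, CS.bnd_actL, CS.bnd_actR, CS.core,
          CS.actR_zero, CS.actL_zero, smul_zero]
  · intro v
    induction v using Finsupp.induction_linear with
    | zero => rw [CS.bnd_zero, CS.bnd0_zero]
    | add f g hf hg => rw [CS.bnd_add, CS.bnd0_add, hf, hg, add_zero]
    | single g c =>
        rw [CS.bnd_single, CS.bnd0_smul, CS.core0 g.1.2.1 g.1.1 g.1.2.2 g.2.1 g.2.2,
          smul_zero]
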